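/- Let {γ_α}_{α∈I} be a finite admissible set of polymers, where γ_α is a sequence of k(α) finite sets. Then the number of sequences Γ of finite sets whose collection of maximally connected subsequences is exactly {γ_α}_{α∈I} equals the multinomial coefficient (Σ_α k(α))! / ∏_α k(α)!. -/

import Mathlib

open scoped Classical

/-- The intersection graph of a finite family of finite sets: `i ~ j` iff the sets overlap. -/
def interGraph {ι : Type} [DecidableEq ι] {n : ℕ} (Γ : Fin n → Finset ι) :
    SimpleGraph (Fin n) :=
  SimpleGraph.fromRel (fun i j => (Γ i ∩ Γ j).Nonempty)

/-- A finite sequence of finite sets is connected if its intersection graph is connected. -/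
def SeqConnected {ι : Type} [DecidableEq ι] (L : List (Finset ι)) : Prop :=
  (interGraph (fun i : Fin L.length => L.get i)).Connected

/-- `Γ` has `{γ α}` as its collection of maximally connected subsequences: there is a labelling
`c` of the entries of `Γ` by polymers such that labels agree exactly on connected components of
the intersection graph of `Γ`, and extracting the entries with label `α` (in increasing order
of their positions) recovers `γ α`. -/
def MaxConnDecomp {ι : Type} [DecidableEq ι] {I : Type} {N : ℕ}
    (Γ : Fin N → Finset ι) (γ : I → List (Finset ι)) : Prop :=
  ∃ c : Fin N → I,
    (∀ i j : Fin N, c i = c j ↔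
      (interGraph Γ).connectedComponentMk i = (interGraph Γ).connectedComponentMk j) ∧
    ∀ α : I, ((Finset.univ.filter (fun i : Fin N => c i = α)).sort (· ≤ ·)).map Γ = γ α

set_option linter.unusedSectionVars false

section Aux

def fiberEquivAux {I : Type*} (F : I → Type*) (α : I) :
    {p : Σ a, F a // p.1 = α} ≃ F α where
  toFun := fun ⟨⟨a, x⟩, h⟩ => h ▸ x
  invFun := fun x => ⟨⟨α, x⟩, rfl⟩
  left_inv := fun ⟨⟨a, x⟩, h⟩ => by subst h; rfl
  right_inv := fun x => rfl

lemma fiberEquivAux_spec {I : Type*} (F : I → Type*) (α : I) (p : Σ a, F a) (h : p.1 = α) :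
    (⟨α, fiberEquivAux F α ⟨p, h⟩⟩ : Σ a, F a) = p := by
  obtain ⟨a, x⟩ := p; subst h; rfl

noncomputable def bigEquiv {V : Type*} {I : Type*} (F : I → Type*) :
    (V ≃ Σ α, F α) ≃ (Σ c : V → I, ∀ α, ({i // c i = α} ≃ F α)) where
  toFun f := ⟨fun i => (f i).1, fun α => (f.subtypeEquiv fun i => Iff.rfl).trans (fiberEquivAux F α)⟩
  invFun p := (Equiv.sigmaFiberEquiv p.1).symm.trans (Equiv.sigmaCongrRight p.2)
  left_inv f := Equiv.ext fun i => fiberEquivAux_spec F _ (f i) rfl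
  right_inv := fun ⟨c, g⟩ => by
    refine Sigma.ext rfl (heq_of_eq ?_)
    funext α
    refine Equiv.ext ?_
    rintro ⟨i, hi⟩
    subst hi
    simp [fiberEquivAux, Equiv.sigmaFiberEquiv, Equiv.sigmaCongrRight]
    rfl


section Part1


variable {ι : Type} [DecidableEq ι] {I : Type} {N : ℕ}

noncomputable def fib (c : Fin N → I) (α : I) : Finset (Fin N) := Finset.univ.filter (fun i => c i = α)

lemma mem_fib {c : Fin N → I} {α : I} {i : Fin N} : i ∈ fib c α ↔ c i = α := by
  simp [fib]

noncomputable def build (γ : I → List (Finset ι)) (c : Fin N → I) (i : Fin N) : Finset ι :=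
  (γ (c i)).getD (((fib c (c i)).sort (· ≤ ·)).idxOf i) ∅

lemma build_get {γ : I → List (Finset ι)} {c : Fin N → I} {α : I}
    (hc : (fib c α).card = (γ α).length) (n : ℕ) (hn : n < ((fib c α).sort (· ≤ ·)).length) :
    build γ c (((fib c α).sort (· ≤ ·)).get ⟨n, hn⟩)
      = (γ α).get ⟨n, by rwa [Finset.length_sort, hc] at hn⟩ := by
  have hmem : ((fib c α).sort (· ≤ ·)).get ⟨n, hn⟩ ∈ fib c α :=
    (Finset.mem_sort _).mp (List.get_mem _ _)
  have hci : c (((fib c α).sort (· ≤ ·)).get ⟨n, hn⟩) = α := mem_fib.mp hmem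
  unfold build
  rw [hci, List.get_idxOf (Finset.sort_nodup _ _)]
  exact List.getD_eq_getElem _ _ _

lemma map_build {γ : I → List (Finset ι)} {c : Fin N → I} {α : I}
    (hc : (fib c α).card = (γ α).length) :
    ((fib c α).sort (· ≤ ·)).map (build γ c) = γ α := by
  have hlen : ((fib c α).sort (· ≤ ·)).length = (γ α).length := by
    rw [Finset.length_sort, hc]
  apply List.ext_get (by simpa using hlen)
  intro n h1 h2
  simp only [List.get_eq_getElem, List.getElem_map]
  exact build_get hc n (by simpa using h1)

lemma build_mem_or_empty (γ : I → List (Finset ι)) (c : Fin N → I) (i : Fin N) :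
    build γ c i ∈ γ (c i) ∨ build γ c i = ∅ := by
  unfold build
  by_cases h : ((fib c (c i)).sort (· ≤ ·)).idxOf i < (γ (c i)).length
  · left; rw [List.getD_eq_getElem _ _ h]; exact List.getElem_mem _
  · right; exact List.getD_eq_default _ _ (le_of_not_gt h)

lemma adj_label {γ : I → List (Finset ι)}
    (hadm : ∀ α α', α ≠ α' → ∀ A ∈ γ α, ∀ B ∈ γ α', Disjoint A B)
    {c : Fin N → I} {i j : Fin N}
    (h : (interGraph (build γ c)).Adj i j) : c i = c j := by
  by_contra hne
  have hdisj : Disjoint (build γ c i) (build γ c j) := by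
    rcases build_mem_or_empty γ c i with hi | hi
    · rcases build_mem_or_empty γ c j with hj | hj
      · exact hadm (c i) (c j) hne _ hi _ hj
      · simp [hj]
    · simp [hi]
  rw [interGraph, SimpleGraph.fromRel_adj] at h
  rcases h.2 with ⟨x, hx⟩ | ⟨x, hx⟩ <;> rw [Finset.mem_inter] at hx
  · exact Finset.disjoint_left.mp hdisj hx.1 hx.2
  · exact Finset.disjoint_left.mp hdisj hx.2 hx.1

lemma reachable_const {V : Type*} {G : SimpleGraph V} {f : V → I}
    (h : ∀ i j, G.Adj i j → f i = f j) {i j : V} (hr : G.Reachable i j) : f i = f j := by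
  obtain ⟨w⟩ := hr
  induction w with
  | nil => rfl
  | cons a _ ih => exact (h _ _ a).trans ih

lemma fib_reachable {γ : I → List (Finset ι)} (hconn : ∀ α, SeqConnected (γ α))
    {c : Fin N → I} (hc : ∀ α, (fib c α).card = (γ α).length) {i j : Fin N}
    (hij : c i = c j) : (interGraph (build γ c)).Reachable i j := by
  set α := c i with hα
  set l := (fib c α).sort (· ≤ ·) with hldef
  have hl : l.length = (γ α).length := by rw [hldef, Finset.length_sort, hc]
  set φ : Fin (γ α).length → Fin N := fun p => l.get (Fin.cast hl.symm p) with hφ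
  have hΓφ : ∀ p, build γ c (φ p) = (γ α).get p := by
    intro p
    have := build_get (γ := γ) (hc α) (Fin.cast hl.symm p).1 (Fin.cast hl.symm p).2
    simpa [hφ] using this
  have hφinj : Function.Injective φ := by
    intro p q hpq
    have h1 := congrArg l.idxOf hpq
    rw [hφ] at h1
    rw [List.get_idxOf (Finset.sort_nodup _ _), List.get_idxOf (Finset.sort_nodup _ _)] at h1
    exact Fin.ext h1
  have hadjφ : ∀ p q, (interGraph (fun p : Fin (γ α).length => (γ α).get p)).Adj p q →
      (interGraph (build γ c)).Adj (φ p) (φ q) := by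
    intro p q h
    rw [interGraph, SimpleGraph.fromRel_adj] at h ⊢
    refine ⟨fun hEq => h.1 (hφinj hEq), ?_⟩
    rcases h.2 with h2 | h2
    · left; rwa [hΓφ, hΓφ]
    · right; rwa [hΓφ, hΓφ]
  let F : (interGraph (fun p : Fin (γ α).length => (γ α).get p)) →g (interGraph (build γ c)) :=
    ⟨φ, fun h => hadjφ _ _ h⟩
  have hi : i ∈ l := (Finset.mem_sort _).mpr (mem_fib.mpr rfl)
  have hj : j ∈ l := (Finset.mem_sort _).mpr (mem_fib.mpr hij.symm)
  obtain ⟨p, hp⟩ := List.get_of_mem hi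
  obtain ⟨q, hq⟩ := List.get_of_mem hj
  have hr := ((hconn α).preconnected (Fin.cast hl p) (Fin.cast hl q)).map F
  have hFp : F (Fin.cast hl p) = i := by
    show φ (Fin.cast hl p) = i
    rw [hφ]
    simpa using hp
  have hFq : F (Fin.cast hl q) = j := by
    show φ (Fin.cast hl q) = j
    rw [hφ]
    simpa using hq
  rwa [hFp, hFq] at hr

lemma build_prop1 {γ : I → List (Finset ι)}
    (hconn : ∀ α, SeqConnected (γ α))
    (hadm : ∀ α α', α ≠ α' → ∀ A ∈ γ α, ∀ B ∈ γ α', Disjoint A B)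
    {c : Fin N → I} (hc : ∀ α, (fib c α).card = (γ α).length) (i j : Fin N) :
    c i = c j ↔ (interGraph (build γ c)).connectedComponentMk i
      = (interGraph (build γ c)).connectedComponentMk j := by
  constructor
  · intro h
    exact SimpleGraph.ConnectedComponent.eq.mpr (fib_reachable hconn hc h)
  · intro h
    exact reachable_const (fun _ _ ha => adj_label hadm ha)
      (SimpleGraph.ConnectedComponent.eq.mp h)

lemma gamma_inj {γ : I → List (Finset ι)} (hne : ∀ α, γ α ≠ [])
    (hnonempty : ∀ α, ∀ A ∈ γ α, A.Nonempty)
    (hadm : ∀ α α', α ≠ α' → ∀ A ∈ γ α, ∀ B ∈ γ α', Disjoint A B) :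
    Function.Injective γ := by
  intro α α' h
  by_contra hne'
  obtain ⟨A, t, hcons⟩ := List.exists_cons_of_ne_nil (hne α)
  have hA : A ∈ γ α := by rw [hcons]; exact List.mem_cons_self
  have hA' : A ∈ γ α' := h ▸ hA
  obtain ⟨x, hx⟩ := hnonempty α A hA
  exact Finset.disjoint_left.mp (hadm α α' hne' A hA A hA') hx hx

lemma witness_unique {γ : I → List (Finset ι)} (hγinj : Function.Injective γ)
    {Γ : Fin N → Finset ι} {c c' : Fin N → I}
    (h1 : ∀ i j : Fin N, c i = c j ↔
      (interGraph Γ).connectedComponentMk i = (interGraph Γ).connectedComponentMk j)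
    (h2 : ∀ α, ((fib c α).sort (· ≤ ·)).map Γ = γ α)
    (h1' : ∀ i j : Fin N, c' i = c' j ↔
      (interGraph Γ).connectedComponentMk i = (interGraph Γ).connectedComponentMk j)
    (h2' : ∀ α, ((fib c' α).sort (· ≤ ·)).map Γ = γ α) : c = c' := by
  funext i
  have hset : fib c (c i) = fib c' (c' i) := by
    ext j
    rw [mem_fib, mem_fib, h1 j i, h1' j i]
  apply hγinj
  rw [← h2 (c i), ← h2' (c' i), hset]



lemma countLemma {I : Type} [Fintype I] (k : I → ℕ) (N : ℕ)
    (hN : N = ∑ α, k α) :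
    Nat.card {c : Fin N → I // ∀ α, (fib c α).card = k α}
      = Nat.multinomial Finset.univ k := by
  classical
  have hcardSigma : Fintype.card (Σ α, Fin (k α)) = N := by simp [hN]
  have e0 : Fin N ≃ Σ α, Fin (k α) := (Fintype.equivFinOfCardEq hcardSigma).symm
  have h1 : Fintype.card (Fin N ≃ Σ α, Fin (k α)) = N.factorial := by
    rw [Fintype.card_equiv e0, Fintype.card_fin]
  have h2 : Fintype.card (Σ c : Fin N → I, ∀ α, ({i // c i = α} ≃ Fin (k α)))
      = N.factorial := by rw [← Fintype.card_congr (bigEquiv (fun α => Fin (k α))), h1]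
  -- compute the sigma card as a sum
  have h3 : Fintype.card (Σ c : Fin N → I, ∀ α, ({i // c i = α} ≃ Fin (k α)))
      = ∑ c : Fin N → I, ∏ α, Fintype.card ({i // c i = α} ≃ Fin (k α)) := by
    rw [Fintype.card_sigma]
    congr 1; funext c; rw [Fintype.card_pi]
  set P : (Fin N → I) → Prop :=
    fun c => ∀ α, (fib c α).card = k α with hP
  have hgood : ∀ c : Fin N → I, P c →
      ∏ α, Fintype.card ({i // c i = α} ≃ Fin (k α)) = ∏ α, (k α).factorial := by
    intro c hc
    refine Finset.prod_congr rfl fun α _ => ?_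
    have : Fintype.card {i // c i = α} = k α := by
      rw [Fintype.card_subtype]; exact hc α
    rw [Fintype.card_equiv (Fintype.equivFinOfCardEq this), this]
  have hbad : ∀ c : Fin N → I, ¬ P c →
      ∏ α, Fintype.card ({i // c i = α} ≃ Fin (k α)) = 0 := by
    intro c hc
    rw [hP, not_forall] at hc
    obtain ⟨α, hα⟩ := hc
    refine Finset.prod_eq_zero (Finset.mem_univ α) ?_
    rw [Fintype.card_eq_zero_iff]
    constructor; rintro e
    refine hα ?_
    unfold fib
    rw [← Fintype.card_subtype (fun i => c i = α), Fintype.card_congr e, Fintype.card_fin]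
  have h4 : (∑ c : Fin N → I, ∏ α, Fintype.card ({i // c i = α} ≃ Fin (k α)))
      = (Finset.univ.filter P).card * ∏ α, (k α).factorial := by
    rw [← Finset.sum_filter_add_sum_filter_not Finset.univ P]
    rw [Finset.sum_congr rfl (fun c hc => hgood c (Finset.mem_filter.mp hc).2),
      Finset.sum_congr rfl (fun c hc => hbad c (Finset.mem_filter.mp hc).2)]
    simp [mul_comm]
  have key : (Finset.univ.filter P).card * ∏ α, (k α).factorial = N.factorial := by
    rw [← h4, ← h3, h2]
  have hM : Nat.card {c : Fin N → I // P c} = (Finset.univ.filter P).card := by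
    rw [Nat.card_eq_fintype_card, Fintype.card_subtype]
  rw [hM]
  have hspec := Nat.multinomial_spec Finset.univ k
  have hpos : 0 < ∏ α, (k α).factorial := Finset.prod_pos fun α _ => Nat.factorial_pos _
  have : (Finset.univ.filter P).card * ∏ α, (k α).factorial = Nat.multinomial Finset.univ k * ∏ α, (k α).factorial := by
    rw [key, mul_comm (Nat.multinomial Finset.univ k), hspec, hN]
  exact Nat.eq_of_mul_eq_mul_right hpos this

end Part1
end Aux

/-- Counting: the number of sequences `Γ` of finite sets whose collection of maximally
connected subsequences is exactly the admissible family of polymers `{γ α}` equals the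
multinomial coefficient `(Σ_α k(α))! / ∏_α k(α)!`. -/
theorem stmt14 {d : ℕ} {I : Type} [Fintype I] [DecidableEq I]
    (γ : I → List (Finset (Fin d → ℤ)))
    (hne : ∀ α, γ α ≠ [])
    (hnonempty : ∀ α, ∀ A ∈ γ α, A.Nonempty)
    (hconn : ∀ α, SeqConnected (γ α))
    (hadm : ∀ α α', α ≠ α' → ∀ A ∈ γ α, ∀ B ∈ γ α', Disjoint A B)
    (N : ℕ) (hN : N = ∑ α, (γ α).length) :
    Nat.card {Γ : Fin N → Finset (Fin d → ℤ) // MaxConnDecomp Γ γ}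
      = Nat.multinomial Finset.univ (fun α => (γ α).length) := by
  have hγinj := gamma_inj hne hnonempty hadm
  let S := {c : Fin N → I // ∀ α, (fib c α).card = (γ α).length}
  let F : S → {Γ : Fin N → Finset (Fin d → ℤ) // MaxConnDecomp Γ γ} := fun c =>
    ⟨build γ c.1, c.1, build_prop1 hconn hadm c.2, fun α => map_build (c.2 α)⟩
  have hinj : Function.Injective F := by
    rintro ⟨c₁, hc₁⟩ ⟨c₂, hc₂⟩ h
    have hb : build γ c₁ = build γ c₂ := congrArg Subtype.val h
    refine Subtype.ext ?_
    refine witness_unique hγinj (Γ := build γ c₁)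
      (build_prop1 hconn hadm hc₁) (fun α => map_build (hc₁ α)) ?_ ?_
    · intro i j; rw [hb]; exact build_prop1 hconn hadm hc₂ i j
    · intro α; rw [hb]; exact map_build (hc₂ α)
  have hsurj : Function.Surjective F := by
    rintro ⟨Γ, hΓ⟩
    obtain ⟨c, h1, h2⟩ := hΓ
    have hc : ∀ α, (fib c α).card = (γ α).length := by
      intro α
      have := congrArg List.length (h2 α)
      simpa [fib] using this
    refine ⟨⟨c, hc⟩, ?_⟩
    refine Subtype.ext ?_
    funext i
    have hmap := map_build (γ := γ) (c := c) (hc (c i))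
    have hmem : i ∈ (fib c (c i)).sort (· ≤ ·) := (Finset.mem_sort _).mpr (mem_fib.mpr rfl)
    exact (List.map_eq_map_iff.mp (hmap.trans (h2 (c i)).symm)) i hmem
  rw [Nat.card_congr (Equiv.ofBijective F ⟨hinj, hsurj⟩).symm]
  exact countLemma (fun α => (γ α).length) N hN
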